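/- A relation β over guarded processes of the prioritized basic calculus is a weak bisimulation if and only if: whenever (P,Q) ∈ β, (i) each P --α--> P' (α standard) is matched by Q ==α̂==> Q' with (P',Q') ∈ β; (ii) each P --δ--> P' is matched either by Q --τ--> (some τ move of Q) or by Q --δ--> (--τ-->)* Q' with (P',Q') ∈ β; and symmetrically. -/
import Mathlib


namespace PrioCalc

inductive Act where
  | tau : Act
  | vis : ℕ → Act
  | delta : Act
deriving DecidableEq

inductive Expr where
  | nil : Expr
  | var : ℕ → Expr
  | pre : Act → Expr → Expr
  | sum : Expr → Expr → Expr
  | recur : ℕ → Expr → Expr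
  | pri : Expr → Expr
deriving DecidableEq

/-- Syntactic substitution of `F` for the free occurrences of variable `x`. -/
def subst : Expr → ℕ → Expr → Expr
  | .nil, _, _ => .nil
  | .var m, x, F => if m = x then F else .var m
  | .pre γ E, x, F => .pre γ (subst E x F)
  | .sum E G, x, F => .sum (subst E x F) (subst G x F)
  | .recur y E, x, F => if y = x then .recur y E else .recur y (subst E x F)
  | .pri E, x, F => .pri (subst E x F)

/-- `free E x` : `x` occurs free in `E`. -/
def free : Expr → ℕ → Prop
  | .nil, _ => False
  | .var m, x => m = x
  | .pre _ E, x => free E x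
  | .sum E G, x => free E x ∨ free G x
  | .recur y E, x => x ≠ y ∧ free E x
  | .pri E, x => free E x

def Closed (E : Expr) : Prop := ∀ x, ¬ free E x

/-- Standard (non-δ) transitions; these never depend on δ-transitions. -/
inductive StepStd : Expr → Act → Expr → Prop where
  | pre {α : Act} (h : α ≠ Act.delta) (E : Expr) : StepStd (.pre α E) α E
  | sumL {P α P'} (Q : Expr) : StepStd P α P' → StepStd (.sum P Q) α P'
  | sumR {Q α Q'} (P : Expr) : StepStd Q α Q' → StepStd (.sum P Q) α Q'
  | unf {x E γ P'} : StepStd (subst E x (.recur x E)) γ P' → StepStd (.recur x E) γ P'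
  | pri {P α P'} : StepStd P α P' → StepStd (.pri P) α P'

def CanTau (P : Expr) : Prop := ∃ P', StepStd P Act.tau P'

/-- δ-transitions (stratified: the negative premise refers to standard transitions). -/
inductive StepDel : Expr → Expr → Prop where
  | pre (E : Expr) : StepDel (.pre Act.delta E) E
  | sumL {P P'} (Q : Expr) : StepDel P P' → ¬ CanTau Q → StepDel (.sum P Q) P'
  | sumR {Q Q'} (P : Expr) : StepDel Q Q' → ¬ CanTau P → StepDel (.sum P Q) Q'
  | unf {x E P'} : StepDel (subst E x (.recur x E)) P' → StepDel (.recur x E) P'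

/-- The full (prioritized) transition relation. -/
def Step (P : Expr) (γ : Act) (Q : Expr) : Prop :=
  if γ = Act.delta then StepDel P Q else StepStd P γ Q

def TauStar : Expr → Expr → Prop :=
  Relation.ReflTransGen (fun P Q => Step P Act.tau Q)

/-- Weak transition `==γ==>` : τ* γ τ* (at least one γ step). -/
def Weak (P : Expr) (γ : Act) (Q : Expr) : Prop :=
  ∃ P₁ P₂, TauStar P P₁ ∧ Step P₁ γ P₂ ∧ TauStar P₂ Q

/-- Weak transition `==γ̂==>`. -/
def WeakHat (P : Expr) (γ : Act) (Q : Expr) : Prop :=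
  if γ = Act.tau then TauStar P Q else Weak P γ Q

def IsWeakBisim (β : Expr → Expr → Prop) : Prop :=
  ∀ P Q, β P Q →
    (∀ γ P', Step P γ P' → ∃ Q', WeakHat Q γ Q' ∧ β P' Q') ∧
    (∀ γ Q', Step Q γ Q' → ∃ P', WeakHat P γ P' ∧ β P' Q')

/-- Weak bisimilarity `≈`. -/
def WBisim (P Q : Expr) : Prop := ∃ β, IsWeakBisim β ∧ β P Q

/-- Observational congruence `≃`. -/
def ObsCong (P Q : Expr) : Prop :=
  (∀ γ P', Step P γ P' → ∃ Q', Weak Q γ Q' ∧ WBisim P' Q') ∧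
  (∀ γ Q', Step Q γ Q' → ∃ P', Weak P γ P' ∧ WBisim P' Q')

/-- Terms of the basic calculus (no occurrence of the auxiliary `pri` operator). -/
def PriFree : Expr → Prop
  | .nil => True
  | .var _ => True
  | .pre _ E => PriFree E
  | .sum E F => PriFree E ∧ PriFree F
  | .recur _ E => PriFree E
  | .pri _ => False

/-- Every free occurrence of `x` in `E` is (strongly) guarded. -/
def GVar : Expr → ℕ → Prop
  | .nil, _ => True
  | .var m, x => m ≠ x
  | .pre γ E, x => γ = Act.tau → GVar E x
  | .sum E F, x => GVar E x ∧ GVar F x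
  | .recur y E, x => y ≠ x → GVar E x
  | .pri E, x => GVar E x

/-- `E` is (strongly) guarded: every recursion subterm is guarded. -/
def Guarded : Expr → Prop
  | .nil => True
  | .var _ => True
  | .pre _ E => Guarded E
  | .sum E F => Guarded E ∧ Guarded F
  | .recur y E => GVar E y ∧ Guarded E
  | .pri E => Guarded E

/-- Some free occurrence of `x` in `E` is unguarded (not under a non-τ prefix). -/
def UnguardedVar : Expr → ℕ → Prop
  | .nil, _ => False
  | .var m, x => m = x
  | .pre γ E, x => γ = Act.tau ∧ UnguardedVar E x
  | .sum E F, x => UnguardedVar E x ∨ UnguardedVar F x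
  | .recur y E, x => y ≠ x ∧ UnguardedVar E x
  | .pri E, x => UnguardedVar E x

/-- `x` is serial in `E` : every subexpression containing `x` free, apart from `x`
itself, is a prefix, a sum or a recursion. -/
def SerialVar : Expr → ℕ → Prop
  | .nil, _ => True
  | .var _, _ => True
  | .pre _ E, x => SerialVar E x
  | .sum E F, x => SerialVar E x ∧ SerialVar F x
  | .recur y E, x => y = x ∨ SerialVar E x
  | .pri E, x => ¬ free E x

/-- Simultaneous substitution of closed terms for free variables. -/
def msubst : Expr → (ℕ → Expr) → Expr
  | .nil, _ => .nil
  | .var m, σ => σ m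
  | .pre γ E, σ => .pre γ (msubst E σ)
  | .sum E F, σ => .sum (msubst E σ) (msubst F σ)
  | .recur y E, σ => .recur y (msubst E (Function.update σ y (.var y)))
  | .pri E, σ => .pri (msubst E σ)

/-- Observational congruence on open terms (via closed substitutions). -/
def ObsCongO (E F : Expr) : Prop :=
  ∀ σ : ℕ → Expr, (∀ n, Closed (σ n)) → ObsCong (msubst E σ) (msubst F σ)

/-- The axiom system 𝒜. -/
inductive Prov : Expr → Expr → Prop where
  | refl (E) : Prov E E
  | symm {E F} : Prov E F → Prov F E
  | trans {E F G} : Prov E F → Prov F G → Prov E G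
  | congPre (γ) {E F} : Prov E F → Prov (.pre γ E) (.pre γ F)
  | congSum {E E' F F'} : Prov E E' → Prov F F' → Prov (.sum E F) (.sum E' F')
  | congRec (x) {E F} : Prov E F → Prov (.recur x E) (.recur x F)
  | congPri {E F} : Prov E F → Prov (.pri E) (.pri F)
  | a1 (E F) : Prov (.sum E F) (.sum F E)
  | a2 (E F G) : Prov (.sum (.sum E F) G) (.sum E (.sum F G))
  | a3 (E) : Prov (.sum E E) E
  | a4 (E) : Prov (.sum E .nil) E
  | tau1 (γ E) : Prov (.pre γ (.pre Act.tau E)) (.pre γ E)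
  | tau2 (E) : Prov (.sum E (.pre Act.tau E)) (.pre Act.tau E)
  | tau3 (γ E F) :
      Prov (.sum (.pre γ (.sum E (.pre Act.tau F))) (.pre γ F))
           (.pre γ (.sum E (.pre Act.tau F)))
  | pri1 : Prov (.pri .nil) .nil
  | pri2 {α} (h : α ≠ Act.delta) (E) : Prov (.pri (.pre α E)) (.pre α E)
  | pri3 (E) : Prov (.pri (.pre Act.delta E)) .nil
  | pri4 (E F) : Prov (.pri (.sum E F)) (.sum (.pri E) (.pri F))
  | pri5 (E) : Prov (.pri (.pri E)) (.pri E)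
  | pri6 (E F) : Prov (.sum (.pre Act.tau E) F) (.sum (.pre Act.tau E) (.pri F))
  | rec1 (x E) : Prov (.recur x E) (subst E x (.recur x E))
  | rec2 {x E F} (hs : SerialVar E x) (hg : GVar E x) :
      Prov F (subst E x F) → Prov F (.recur x E)
  | ung1 (x E) : Prov (.recur x (.sum (.var x) E)) (.recur x E)
  | ung2 (x E) :
      Prov (.recur x (.sum (.pre Act.tau (.var x)) E)) (.recur x (.pre Act.tau (.pri E)))
  | ung3 (x E F) :
      Prov (.recur x (.sum (.pre Act.tau (.sum (.var x) E)) F))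
           (.recur x (.sum (.sum (.pre Act.tau (.var x)) E) F))
  | ung4 (x E F) :
      Prov (.recur x (.sum (.pre Act.tau (.sum (.pri (.var x)) E)) F))
           (.recur x (.sum (.sum (.pre Act.tau (.var x)) E) F))

/-- Standard equation sets: formal variables are `X i = var i` for `i < n`,
free variables are variables `≥ n`. -/
structure StdEqSet (n : ℕ) where
  pres : Fin n → List (Act × Fin n)
  frees : Fin n → List ℕ
  frees_ge : ∀ i, ∀ w ∈ frees i, n ≤ w

/-- The body `H_i{Ẽ/X̃}` of the `i`-th equation with expressions `Es` for the
formal variables. -/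
def instBody {n : ℕ} (S : StdEqSet n) (Es : Fin n → Expr) (i : Fin n) : Expr :=
  (S.pres i).foldr (fun p acc => Expr.sum (Expr.pre p.1 (Es p.2)) acc)
    ((S.frees i).foldr (fun w acc => Expr.sum (Expr.var w) acc) Expr.nil)

/-- `E` provably satisfies `S` (distinguished variable `X 0`). -/
def ProvSat {n : ℕ} (hn : 0 < n) (E : Expr) (S : StdEqSet n) : Prop :=
  ∃ Es : Fin n → Expr, Es ⟨0, hn⟩ = E ∧
    (∀ i x, free (Es i) x → n ≤ x) ∧
    (∀ i, Prov (Es i) (instBody S Es i))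

/-- No equation contains both a τ-prefixed and a δ-prefixed summand. -/
def Prioritized {n : ℕ} (S : StdEqSet n) : Prop :=
  ∀ i, (∃ j, (Act.tau, j) ∈ S.pres i) → ∀ j, (Act.delta, j) ∉ S.pres i

/-- No cycle of unguarded (i.e. τ-prefixed) dependencies. -/
def EqGuarded {n : ℕ} (S : StdEqSet n) : Prop :=
  ∀ i : Fin n, ¬ Relation.TransGen (fun i j : Fin n => (Act.tau, j) ∈ S.pres i) i i

/-- Delete every δ-prefixed summand from equations that also contain a
τ-prefixed summand. -/
def prioritize {n : ℕ} (S : StdEqSet n) : StdEqSet n where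
  pres i := if (S.pres i).any (fun p => decide (p.1 = Act.tau))
            then (S.pres i).filter (fun p => decide (p.1 ≠ Act.delta))
            else S.pres i
  frees := S.frees
  frees_ge := S.frees_ge

/- ------------ auxiliary lemmas ------------ -/

lemma step_tau {P Q : Expr} : Step P Act.tau Q ↔ StepStd P Act.tau Q := by
  simp [Step]

lemma step_delta {P Q : Expr} : Step P Act.delta Q ↔ StepDel P Q := by
  simp [Step]

lemma step_ne {γ : Act} (h : γ ≠ Act.delta) {P Q : Expr} :
    Step P γ Q ↔ StepStd P γ Q := by simp [Step, h]

/-- If `P` has a δ-transition then it has no τ-transition. -/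
lemma noTau {P P' : Expr} (h : StepDel P P') : ¬ CanTau P := by
  induction h with
  | pre E =>
    rintro ⟨P'', hP''⟩
    cases hP''
  | sumL Q hP hQ ih =>
    rintro ⟨P'', hP''⟩
    cases hP'' with
    | sumL _ h => exact ih ⟨_, h⟩
    | sumR _ h => exact hQ ⟨_, h⟩
  | sumR P hQ hP ih =>
    rintro ⟨P'', hP''⟩
    cases hP'' with
    | sumL _ h => exact hP ⟨_, h⟩
    | sumR _ h => exact ih ⟨_, h⟩
  | unf h ih =>
    rintro ⟨P'', hP''⟩
    cases hP'' with
    | unf h' => exact ih ⟨_, h'⟩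

lemma tauStar_eq_of_noTau {P P₁ : Expr} (h : ¬ CanTau P) (hs : TauStar P P₁) :
    P₁ = P := by
  rcases (Relation.ReflTransGen.cases_head hs) with rfl | ⟨c, hc, _⟩
  · rfl
  · exact absurd ⟨c, step_tau.1 hc⟩ h

lemma free_subst {E : Expr} {x : ℕ} {F : Expr} {y : ℕ}
    (h : free (subst E x F) y) : (y ≠ x ∧ free E y) ∨ free F y := by
  induction E with
  | nil => exact absurd h id
  | var m =>
    by_cases hm : m = x
    · simp [subst, hm] at h; exact Or.inr h
    · simp [subst, hm, free] at h
      exact Or.inl ⟨by omega, by simp [free, h]⟩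
  | pre γ E ih => exact ih h
  | sum E G ihE ihG =>
    rcases h with h | h
    · rcases ihE h with ⟨h1, h2⟩ | h; exacts [Or.inl ⟨h1, Or.inl h2⟩, Or.inr h]
    · rcases ihG h with ⟨h1, h2⟩ | h; exacts [Or.inl ⟨h1, Or.inr h2⟩, Or.inr h]
  | recur z E ih =>
    by_cases hz : z = x
    · simp [subst, hz] at h
      exact Or.inl ⟨by rcases h with ⟨h1, _⟩; omega, by simpa [hz] using h⟩
    · simp [subst, hz] at h
      obtain ⟨h1, h2⟩ := h
      rcases ih h2 with ⟨h3, h4⟩ | h3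
      · exact Or.inl ⟨h3, ⟨h1, h4⟩⟩
      · exact Or.inr h3
  | pri E ih => exact ih h

lemma closed_subst {E : Expr} {x : ℕ} (h : Closed (.recur x E)) :
    Closed (subst E x (.recur x E)) := by
  intro y hy
  rcases free_subst hy with ⟨h1, h2⟩ | h2
  · exact h y ⟨h1, h2⟩
  · exact h y h2

lemma gvar_of_not_free {F : Expr} {y : ℕ} (h : ¬ free F y) : GVar F y := by
  induction F with
  | nil => trivial
  | var m => simpa [free, GVar] using h
  | pre γ E ih => exact fun _ => ih h
  | sum E G ihE ihG =>
    simp only [free, not_or] at h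
    exact ⟨ihE h.1, ihG h.2⟩
  | recur z E ih =>
    intro hz
    refine ih fun hf => h ?_
    exact ⟨fun hzy => hz hzy.symm, hf⟩
  | pri E ih => exact ih h

lemma gvar_subst {E : Expr} {x : ℕ} {F : Expr} {y : ℕ}
    (hE : GVar E y) (hF : GVar F y) : GVar (subst E x F) y := by
  induction E with
  | nil => trivial
  | var m =>
    by_cases hm : m = x
    · simpa [subst, hm] using hF
    · simpa [subst, hm, GVar] using hE
  | pre γ E ih => exact fun hγ => ih (hE hγ)
  | sum E G ihE ihG => exact ⟨ihE hE.1, ihG hE.2⟩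
  | recur z E ih =>
    by_cases hz : z = x
    · simpa [subst, hz] using hE
    · simp only [subst, hz, if_false]
      exact fun hzy => ih (hE hzy)
  | pri E ih => exact ih hE

lemma guarded_subst {E : Expr} {x : ℕ} {F : Expr}
    (hE : Guarded E) (hF : Guarded F) (hcl : ∀ y, ¬ free F y) :
    Guarded (subst E x F) := by
  induction E with
  | nil => trivial
  | var m =>
    by_cases hm : m = x
    · simpa [subst, hm] using hF
    · simp [subst, hm, Guarded]
  | pre γ E ih => exact ih hE
  | sum E G ihE ihG => exact ⟨ihE hE.1, ihG hE.2⟩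
  | recur z E ih =>
    by_cases hz : z = x
    · simpa [subst, hz] using hE
    · simp only [subst, hz, if_false]
      exact ⟨gvar_subst hE.1 (gvar_of_not_free (hcl z)), ih hE.2⟩
  | pri E ih => exact ih hE

/-- τ-depth of a term: an upper bound on the length of τ-paths. -/
def td : Expr → ℕ
  | .nil => 0
  | .var _ => 0
  | .pre γ E => if γ = Act.tau then td E + 1 else 0
  | .sum E F => max (td E) (td F)
  | .recur _ E => td E
  | .pri E => td E

lemma td_subst {E : Expr} {x : ℕ} {F : Expr} (h : GVar E x) :
    td (subst E x F) = td E := by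
  induction E with
  | nil => rfl
  | var m =>
    have : m ≠ x := h
    simp [subst, this]
  | pre γ E ih =>
    by_cases hγ : γ = Act.tau
    · simp [subst, td, hγ, ih (h hγ)]
    · simp [subst, td, hγ]
  | sum E G ihE ihG => simp [subst, td, ihE h.1, ihG h.2]
  | recur z E ih =>
    by_cases hz : z = x
    · simp [subst, hz]
    · simp [subst, hz, td, ih (h hz)]
  | pri E ih => simp [subst, td, ih h]

lemma closed_free {P : Expr} (h : Closed P) : ∀ y, ¬ free P y := h

lemma td_decrease' : ∀ {P P' : Expr} {γ : Act}, StepStd P γ P' → γ = Act.tau →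
    Closed P → Guarded P → td P' < td P := by
  intro P P' γ h
  induction h with
  | pre hne E =>
    intro hγ _ _
    subst hγ
    simp [td]
  | sumL Q h ih =>
    intro hγ hcl hg
    have hclP : Closed _ := fun y hy => hcl y (Or.inl hy)
    have := ih hγ hclP hg.1
    calc td _ < td _ := this
    _ ≤ _ := le_max_left _ _
  | sumR P h ih =>
    intro hγ hcl hg
    have hclQ : Closed _ := fun y hy => hcl y (Or.inr hy)
    have := ih hγ hclQ hg.2
    calc td _ < td _ := this
    _ ≤ _ := le_max_right _ _
  | @unf x E γ P' h ih =>
    intro hγ hcl hg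
    have hcl' := closed_subst hcl
    have hg' : Guarded (subst E x (.recur x E)) :=
      guarded_subst hg.2 hg hcl
    have := ih hγ hcl' hg'
    rwa [td_subst hg.1] at this
  | pri h ih =>
    intro hγ hcl hg
    exact ih hγ hcl hg

lemma td_decrease {P P' : Expr} (h : StepStd P Act.tau P')
    (hcl : Closed P) (hg : Guarded P) : td P' < td P :=
  td_decrease' h rfl hcl hg

/-- Key lemma: matching δ-moves using termination of τ-paths. -/
lemma delta_key (R : Expr → Expr → Prop)
    (hg : ∀ P Q, R P Q → Closed Q ∧ Guarded Q)
    (hδ : ∀ P Q P', R P Q → StepDel P P' →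
      (∃ Q'', StepStd Q Act.tau Q'') ∨
      ∃ Q₀ Q', StepDel Q Q₀ ∧ TauStar Q₀ Q' ∧ R P' Q')
    (hτ : ∀ P Q Q'', R P Q → ¬ CanTau P → StepStd Q Act.tau Q'' → R P Q'') :
    ∀ n P Q P', td Q ≤ n → R P Q → StepDel P P' →
      ∃ Q', Weak Q Act.delta Q' ∧ R P' Q' := by
  intro n
  induction n with
  | zero =>
    intro P Q P' hle hR hd
    rcases hδ P Q P' hR hd with ⟨Q'', hQτ⟩ | ⟨Q₀, Q', h1, h2, h3⟩
    · have := td_decrease hQτ (hg P Q hR).1 (hg P Q hR).2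
      omega
    · exact ⟨Q', ⟨Q, Q₀, Relation.ReflTransGen.refl, step_delta.2 h1, h2⟩, h3⟩
  | succ n ih =>
    intro P Q P' hle hR hd
    rcases hδ P Q P' hR hd with ⟨Q'', hQτ⟩ | ⟨Q₀, Q', h1, h2, h3⟩
    · have hlt := td_decrease hQτ (hg P Q hR).1 (hg P Q hR).2
      have hR' := hτ P Q Q'' hR (noTau hd) hQτ
      obtain ⟨Q', ⟨Q₁, Q₂, a, b, c⟩, hb⟩ := ih P Q'' P' (by omega) hR' hd
      exact ⟨Q', ⟨Q₁, Q₂, Relation.ReflTransGen.head (step_tau.2 hQτ) a, b, c⟩, hb⟩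
    · exact ⟨Q', ⟨Q, Q₀, Relation.ReflTransGen.refl, step_delta.2 h1, h2⟩, h3⟩

/-- reformulation of weak bisimulation over guarded processes. -/
theorem weak_bisim_iff_over_guarded (β : Expr → Expr → Prop)
    (hdom : ∀ P Q, β P Q →
      (Closed P ∧ PriFree P ∧ Guarded P) ∧ (Closed Q ∧ PriFree Q ∧ Guarded Q)) :
    IsWeakBisim β ↔
      (∀ P Q, β P Q →
        (∀ α P', α ≠ Act.delta → Step P α P' →
          ∃ Q', WeakHat Q α Q' ∧ β P' Q') ∧
        (∀ P', Step P Act.delta P' →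
          (∃ Q'', Step Q Act.tau Q'') ∨
          (∃ Q₀ Q', Step Q Act.delta Q₀ ∧ TauStar Q₀ Q' ∧ β P' Q')) ∧
        (∀ α Q', α ≠ Act.delta → Step Q α Q' →
          ∃ P', WeakHat P α P' ∧ β P' Q') ∧
        (∀ Q', Step Q Act.delta Q' →
          (∃ P'', Step P Act.tau P'') ∨
          (∃ P₀ P', Step P Act.delta P₀ ∧ TauStar P₀ P' ∧ β P' Q'))) := by
  constructor
  · intro hB P Q hPQ
    obtain ⟨h1, h2⟩ := hB P Q hPQ
    refine ⟨fun α P' _ hs => h1 α P' hs, ?_, fun α Q' _ hs => h2 α Q' hs, ?_⟩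
    · intro P' hstep
      obtain ⟨Q', hW, hβ⟩ := h1 Act.delta P' hstep
      simp only [WeakHat, if_neg (by simp : Act.delta ≠ Act.tau)] at hW
      obtain ⟨Q₁, Q₂, hts, hd, hts2⟩ := hW
      rcases Relation.ReflTransGen.cases_head hts with rfl | ⟨c, hc, _⟩
      · exact Or.inr ⟨Q₂, Q', hd, hts2, hβ⟩
      · exact Or.inl ⟨c, hc⟩
    · intro Q' hstep
      obtain ⟨P', hW, hβ⟩ := h2 Act.delta Q' hstep
      simp only [WeakHat, if_neg (by simp : Act.delta ≠ Act.tau)] at hW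
      obtain ⟨P₁, P₂, hts, hd, hts2⟩ := hW
      rcases Relation.ReflTransGen.cases_head hts with rfl | ⟨c, hc, _⟩
      · exact Or.inr ⟨P₂, P', hd, hts2, hβ⟩
      · exact Or.inl ⟨c, hc⟩
  · intro H P Q hPQ
    constructor
    · intro γ P' hstep
      by_cases hγ : γ = Act.delta
      · subst hγ
        have hd : StepDel P P' := step_delta.1 hstep
        have key := delta_key β
          (fun P Q h => ⟨((hdom P Q h).2).1, ((hdom P Q h).2).2.2⟩)
          (fun P Q P' h hPd => by
            rcases (H P Q h).2.1 P' (step_delta.2 hPd) with ⟨Q'', hQ''⟩ | ⟨Q₀, Q', a, b, c⟩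
            · exact Or.inl ⟨Q'', step_tau.1 hQ''⟩
            · exact Or.inr ⟨Q₀, Q', step_delta.1 a, b, c⟩)
          (fun P Q Q'' h hnc hs => by
            obtain ⟨P₁, hW, hb⟩ := (H P Q h).2.2.1 Act.tau Q'' (by simp) (step_tau.2 hs)
            simp only [WeakHat, if_pos rfl] at hW
            rwa [tauStar_eq_of_noTau hnc hW] at hb)
          (td Q) P Q P' le_rfl hPQ hd
        obtain ⟨Q', hw, hb⟩ := key
        refine ⟨Q', ?_, hb⟩
        simpa only [WeakHat, if_neg (by simp : Act.delta ≠ Act.tau)] using hw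
      · exact (H P Q hPQ).1 γ P' hγ hstep
    · intro γ Q' hstep
      by_cases hγ : γ = Act.delta
      · subst hγ
        have hd : StepDel Q Q' := step_delta.1 hstep
        have key := delta_key (fun a b => β b a)
          (fun Q P h => ⟨((hdom P Q h).1).1, ((hdom P Q h).1).2.2⟩)
          (fun Q P Q' h hQd => by
            rcases (H P Q h).2.2.2 Q' (step_delta.2 hQd) with ⟨P'', hP''⟩ | ⟨P₀, P', a, b, c⟩
            · exact Or.inl ⟨P'', step_tau.1 hP''⟩
            · exact Or.inr ⟨P₀, P', step_delta.1 a, b, c⟩)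
          (fun Q P P'' h hnc hs => by
            obtain ⟨Q₁, hW, hb⟩ := (H P Q h).1 Act.tau P'' (by simp) (step_tau.2 hs)
            simp only [WeakHat, if_pos rfl] at hW
            rwa [tauStar_eq_of_noTau hnc hW] at hb)
          (td P) Q P Q' le_rfl hPQ hd
        obtain ⟨P', hw, hb⟩ := key
        refine ⟨P', ?_, hb⟩
        simpa only [WeakHat, if_neg (by simp : Act.delta ≠ Act.tau)] using hw
      · exact (H P Q hPQ).2.2.1 γ Q' hγ hstep

end PrioCalc
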